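/- Let p be an odd prime and let m be a positive integer such that p^a < m < p^{a+1} < 2m for some integer a ≥ 0. Then for every positive integer b, setting n = m·p^b, the prime p divides C(2n−1, n−1), and hence C(2n−1, n−1) ≢ 1 (mod p). -/

import Mathlib

theorem p_dvd_w_n (p : ℕ) (hp : p.Prime) (hodd : Odd p)
    (m : ℕ) (hm : 0 < m) (a : ℕ)
    (h1 : p ^ a < m) (h2 : m < p ^ (a + 1)) (h3 : p ^ (a + 1) < 2 * m)
    (b : ℕ) (hb : 0 < b) :
    p ∣ (2 * (m * p ^ b) - 1).choose (m * p ^ b - 1) ∧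
      ¬ (2 * (m * p ^ b) - 1).choose (m * p ^ b - 1) ≡ 1 [MOD p] := by
  have hp1 : 1 < p := hp.one_lt
  set n := m * p ^ b with hn
  have hpb : 0 < p ^ b := pow_pos (Nat.lt_of_lt_of_le Nat.zero_lt_one hp1.le) b
  have hn0 : 0 < n := Nat.mul_pos hm hpb
  -- key size facts
  have hnlt : n < p ^ (a + 1 + b) := by
    calc n = m * p ^ b := rfl
    _ < p ^ (a+1) * p ^ b := (Nat.mul_lt_mul_right hpb).mpr h2
    _ = p ^ (a + 1 + b) := by rw [← pow_add]
  have hge : p ^ (a + 1 + b) ≤ 2 * n - 1 := by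
    have : p ^ (a+1) * p ^ b ≤ (2 * m - 1) * p ^ b := by
      apply Nat.mul_le_mul_right
      omega
    have h2' : (2 * m - 1) * p ^ b ≤ 2 * n - 1 := by
      have : (2*m - 1) * p ^ b = 2 * n - p ^ b := by
        rw [hn, Nat.sub_mul]; ring_nf
      rw [this]
      omega
    calc p ^ (a + 1 + b) = p ^ (a+1) * p ^ b := by rw [pow_add]
    _ ≤ (2 * m - 1) * p ^ b := this
    _ ≤ 2 * n - 1 := h2'
  have hkn : n - 1 ≤ 2 * n - 1 := by omega
  -- bound the log
  have hlog : Nat.log p (2 * n - 1) < a + b + 2 := by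
    apply Nat.log_lt_of_lt_pow (by omega)
    calc 2 * n - 1 < 2 * p ^ (a + 1 + b) := by omega
    _ ≤ p * p ^ (a + 1 + b) := Nat.mul_le_mul_right _ (by omega)
    _ = p ^ (a + b + 2) := by rw [← pow_succ']; ring_nf
  have hmult := Nat.Prime.emultiplicity_choose (b := a + b + 2) hp hkn hlog
  have hdvd : p ∣ (2 * n - 1).choose (n - 1) := by
    have h1le : (1 : ℕ∞) ≤ emultiplicity p ((2 * n - 1).choose (n - 1)) := by
      rw [hmult]
      have hmem : a + 1 + b ∈ Finset.filter
          (fun i => p ^ i ≤ (n - 1) % p ^ i + (2 * n - 1 - (n - 1)) % p ^ i)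
          (Finset.Ico 1 (a + b + 2)) := by
        rw [Finset.mem_filter, Finset.mem_Ico]
        refine ⟨⟨by omega, by omega⟩, ?_⟩
        have e1 : (n - 1) % p ^ (a + 1 + b) = n - 1 := Nat.mod_eq_of_lt (by omega)
        have e2 : (2 * n - 1 - (n - 1)) % p ^ (a + 1 + b) = n := by
          have : 2 * n - 1 - (n - 1) = n := by omega
          rw [this]; exact Nat.mod_eq_of_lt hnlt
        rw [e1, e2]; omega
      have hcard : 1 ≤ (Finset.filter
          (fun i => p ^ i ≤ (n - 1) % p ^ i + (2 * n - 1 - (n - 1)) % p ^ i)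
          (Finset.Ico 1 (a + b + 2))).card := Finset.card_pos.mpr ⟨_, hmem⟩
      exact_mod_cast hcard
    have := (pow_dvd_iff_le_emultiplicity (k := 1)).mpr (by simpa using h1le)
    simpa using this
  refine ⟨hdvd, fun hmod => ?_⟩
  have h0 : (2 * n - 1).choose (n - 1) % p = 0 := Nat.mod_eq_zero_of_dvd hdvd
  have h1' : (2 * n - 1).choose (n - 1) % p = 1 % p := hmod
  have h2' : (1 : ℕ) % p = 1 := Nat.mod_eq_of_lt hp1
  omega
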